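/- Let (V,C,u) be an order unit space with a strictly convex cone, g : C° → C° a bijective antihomogeneous order-antimorphism, and x ∈ C°. Let G_x : V → V be a linear bijection with G_x(z) = −lim_{t→0} (g(x+tz) − g(x))/t for all z ∈ V, and let S_x = G_x⁻¹ ∘ g : C° → C°. Then S_x(x) = x and S_x(S_x(y)) = y for all y ∈ C°. -/

import Mathlib

open Set Filter Topology

variable {V : Type*} [NormedAddCommGroup V] [NormedSpace ℝ V]

/-- `(V, C, u)` is an order unit space whose norm is the order unit norm of `(C, u)`:
`C` is an Archimedean cone and `u` is an order unit of it. -/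
structure IsOrderUnitSpace (C : Set V) (u : V) : Prop where
  convex : Convex ℝ C
  smul_mem : ∀ l : ℝ, 0 ≤ l → ∀ x ∈ C, l • x ∈ C
  salient : C ∩ (-C) = {0}
  archimedean : ∀ x : V, ∀ y ∈ C, (∀ n : ℕ, 0 < n → y - (n : ℝ) • x ∈ C) → -x ∈ C
  unit_mem : u ∈ C
  order_unit : ∀ x : V, ∃ l : ℝ, 0 ≤ l ∧ l • u - x ∈ C
  norm_eq : ∀ x : V, ‖x‖ = sInf {l : ℝ | 0 < l ∧ x + l • u ∈ C ∧ l • u - x ∈ C}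

/-- `M(x/y) = inf {β > 0 : x ≤_C β y}`. -/
noncomputable def Mratio (C : Set V) (x y : V) : ℝ :=
  sInf {b : ℝ | 0 < b ∧ b • y - x ∈ C}

/-- The cone `C` is strictly convex: the open segment between any two linearly
independent boundary points lies in the interior. -/
def StrictlyConvexCone (C : Set V) : Prop :=
  ∀ x ∈ frontier C, ∀ y ∈ frontier C, LinearIndependent ℝ ![x, y] →
    openSegment ℝ x y ⊆ interior C

/-- `g` is antihomogeneous on the interior of `C`: `g (λ x) = λ⁻¹ g x`. -/
def IsAntihomogeneous (C : Set V) (g : V → V) : Prop :=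
  ∀ l : ℝ, 0 < l → ∀ x ∈ interior C, g (l • x) = l⁻¹ • g x

/-- `g` is an order-antimorphism of the interior of `C`: `x ≤_C y ↔ g y ≤_C g x`. -/
def IsOrderAntimorphism (C : Set V) (g : V → V) : Prop :=
  ∀ x ∈ interior C, ∀ y ∈ interior C, (y - x ∈ C ↔ g x - g y ∈ C)

/-- A state of `(V, C, u)`: a positive linear functional with `φ u = 1`. -/
def IsState (C : Set V) (u : V) (φ : V →ₗ[ℝ] ℝ) : Prop :=
  (∀ x ∈ C, 0 ≤ φ x) ∧ φ u = 1

namespace IsOrderUnitSpace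

variable {C : Set V} {u : V} (h : IsOrderUnitSpace C u)
include h

theorem zero_mem : (0 : V) ∈ C := by
  have : (0:V) ∈ C ∩ (-C) := h.salient ▸ rfl
  exact this.1

theorem add_mem {a b : V} (ha : a ∈ C) (hb : b ∈ C) : a + b ∈ C := by
  have h2 := h.convex ha hb (by norm_num : (0:ℝ) ≤ 1/2) (by norm_num : (0:ℝ) ≤ 1/2) (by norm_num)
  have := h.smul_mem 2 (by norm_num) _ h2
  convert this using 1
  module

theorem eq_zero_of_mem_neg {a : V} (ha : a ∈ C) (hb : -a ∈ C) : a = 0 := by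
  have : a ∈ C ∩ (-C) := ⟨ha, by simpa [Set.mem_neg] using hb⟩
  rw [h.salient] at this
  exact this

theorem norm_lt_mem {z : V} {l : ℝ} (hl : ‖z‖ < l) : z + l • u ∈ C ∧ l • u - z ∈ C := by
  have hS : ‖z‖ = sInf {l : ℝ | 0 < l ∧ z + l • u ∈ C ∧ l • u - z ∈ C} := h.norm_eq z
  set S := {l : ℝ | 0 < l ∧ z + l • u ∈ C ∧ l • u - z ∈ C} with hSdef
  have hne : S.Nonempty := by
    obtain ⟨l₁, hl₁, hm₁⟩ := h.order_unit z
    obtain ⟨l₂, hl₂, hm₂⟩ := h.order_unit (-z)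
    refine ⟨l₁ + l₂ + 1, by positivity, ?_, ?_⟩
    · have : z + (l₁ + l₂ + 1) • u = (l₂ • u - -z) + (l₁ + 1) • u := by module
      rw [this]
      exact h.add_mem hm₂ (h.smul_mem _ (by positivity) _ h.unit_mem)
    · have : (l₁ + l₂ + 1) • u - z = (l₁ • u - z) + (l₂ + 1) • u := by module
      rw [this]
      exact h.add_mem hm₁ (h.smul_mem _ (by positivity) _ h.unit_mem)
  have hsinf : sInf S < l := by rw [← hS]; exact hl
  obtain ⟨s, hsS, hsl⟩ := exists_lt_of_csInf_lt hne hsinf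
  obtain ⟨hs0, hs1, hs2⟩ := hsS
  constructor
  · have : z + l • u = (z + s • u) + (l - s) • u := by module
    rw [this]
    exact h.add_mem hs1 (h.smul_mem _ (by linarith) _ h.unit_mem)
  · have : l • u - z = (s • u - z) + (l - s) • u := by module
    rw [this]
    exact h.add_mem hs2 (h.smul_mem _ (by linarith) _ h.unit_mem)

theorem norm_le_of {w : V} {c : ℝ} (hc : 0 ≤ c) (h1 : c • u - w ∈ C) (h2 : w + c • u ∈ C) :
    ‖w‖ ≤ c := by
  refine le_of_forall_pos_le_add fun ε hε => ?_
  rw [h.norm_eq w]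
  have hbdd : BddBelow {l : ℝ | 0 < l ∧ w + l • u ∈ C ∧ l • u - w ∈ C} :=
    ⟨0, fun l hl => hl.1.le⟩
  refine csInf_le hbdd ⟨by positivity, ?_, ?_⟩
  · have : w + (c + ε) • u = (w + c • u) + ε • u := by module
    rw [this]; exact h.add_mem h2 (h.smul_mem _ hε.le _ h.unit_mem)
  · have : (c + ε) • u - w = (c • u - w) + ε • u := by module
    rw [this]; exact h.add_mem h1 (h.smul_mem _ hε.le _ h.unit_mem)

theorem isClosed : IsClosed C := by
  refine isClosed_of_closure_subset fun v hv => ?_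
  have key : ∀ n : ℕ, 0 < n → u - (n : ℝ) • (-v) ∈ C := by
    intro n hn
    obtain ⟨c, hcC, hdist⟩ := Metric.mem_closure_iff.mp hv ((n : ℝ)⁻¹)
      (by positivity)
    have h1 : ‖(n : ℝ) • (v - c)‖ < 1 := by
      rw [norm_smul, Real.norm_natCast]
      have : dist v c = ‖v - c‖ := dist_eq_norm v c
      rw [this] at hdist
      have hn' : (0:ℝ) < n := by exact_mod_cast hn
      calc (n:ℝ) * ‖v - c‖ < (n:ℝ) * (n:ℝ)⁻¹ := by
            apply mul_lt_mul_of_pos_left hdist hn'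
        _ = 1 := by field_simp
    have h2 : (n : ℝ) • (v - c) + (1:ℝ) • u ∈ C := (h.norm_lt_mem h1).1
    have : u - (n : ℝ) • (-v) = ((n : ℝ) • (v - c) + (1:ℝ) • u) + (n:ℝ) • c := by module
    rw [this]
    exact h.add_mem h2 (h.smul_mem _ (by positivity) _ hcC)
  have := h.archimedean (-v) u h.unit_mem key
  simpa using this

theorem mem_interior_iff {z : V} : z ∈ interior C ↔ ∃ ε : ℝ, 0 < ε ∧ z - ε • u ∈ C := by
  constructor
  · intro hz
    obtain ⟨ε, hε, hball⟩ := Metric.mem_nhds_iff.mp (mem_interior_iff_mem_nhds.mp hz)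
    refine ⟨ε / (2 * (‖u‖ + 1)), by positivity, ?_⟩
    apply hball
    rw [Metric.mem_ball, dist_eq_norm]
    have : z - (ε / (2 * (‖u‖ + 1))) • u - z = -((ε / (2 * (‖u‖ + 1))) • u) := by module
    rw [this, norm_neg, norm_smul, Real.norm_eq_abs, abs_of_pos (by positivity)]
    have hu1 : ‖u‖ < ‖u‖ + 1 := by linarith
    calc ε / (2 * (‖u‖ + 1)) * ‖u‖ ≤ ε / (2 * (‖u‖ + 1)) * (‖u‖ + 1) := by
          apply mul_le_mul_of_nonneg_left hu1.le (by positivity)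
      _ = ε / 2 := by field_simp
      _ < ε := by linarith
  · rintro ⟨ε, hε, hz⟩
    apply mem_interior_iff_mem_nhds.mpr
    apply Metric.mem_nhds_iff.mpr
    refine ⟨ε, hε, fun w hw => ?_⟩
    rw [Metric.mem_ball, dist_eq_norm] at hw
    have h2 : (w - z) + ε • u ∈ C := (h.norm_lt_mem hw).1
    have : w = (z - ε • u) + ((w - z) + ε • u) := by module
    rw [this]
    exact h.add_mem hz h2

theorem interior_add_mem {a b : V} (ha : a ∈ interior C) (hb : b ∈ C) :
    a + b ∈ interior C := by
  obtain ⟨ε, hε, hm⟩ := h.mem_interior_iff.mp ha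
  refine h.mem_interior_iff.mpr ⟨ε, hε, ?_⟩
  have : a + b - ε • u = (a - ε • u) + b := by module
  rw [this]; exact h.add_mem hm hb

theorem interior_smul {a : V} {c : ℝ} (hc : 0 < c) (ha : a ∈ interior C) :
    c • a ∈ interior C := by
  obtain ⟨ε, hε, hm⟩ := h.mem_interior_iff.mp ha
  refine h.mem_interior_iff.mpr ⟨c * ε, by positivity, ?_⟩
  have : c • a - (c * ε) • u = c • (a - ε • u) := by module
  rw [this]; exact h.smul_mem _ hc.le _ hm

theorem not_zero_interior [Nontrivial V] : (0 : V) ∉ interior C := by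
  intro h0
  obtain ⟨ε, hε, hm⟩ := h.mem_interior_iff.mp h0
  have h1 : -(ε • u) ∈ C := by simpa using hm
  have h2 : ε • u ∈ C := h.smul_mem _ hε.le _ h.unit_mem
  have h3 : ε • u = 0 := h.eq_zero_of_mem_neg h2 h1
  have hu : u = 0 := by
    have := smul_eq_zero.mp h3
    rcases this with h' | h'
    · exact absurd h' (ne_of_gt hε)
    · exact h'
  obtain ⟨v, w, hvw⟩ := exists_pair_ne V
  apply hvw
  have key : ∀ p : V, p ∈ C := by
    intro p
    obtain ⟨l, _, hm'⟩ := h.order_unit (-p)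
    rw [hu] at hm'
    simpa using hm'
  have : v - w = 0 := h.eq_zero_of_mem_neg (key _) (by simpa using key (w - v))
  rw [sub_eq_zero] at this
  exact this

theorem ne_zero_of_interior [Nontrivial V] {a : V} (ha : a ∈ interior C) : a ≠ 0 := by
  intro h0; exact h.not_zero_interior (h0 ▸ ha)

theorem pos_of_smul_eq [Nontrivial V] {a b : V} {c : ℝ} (ha : a ∈ interior C)
    (hb : b ∈ interior C) (hab : a = c • b) : 0 < c := by
  rcases lt_trichotomy c 0 with hc | hc | hc
  · exfalso
    have hna : -a ∈ C := by
      rw [hab]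
      have : -(c • b) = (-c) • b := by module
      rw [this]
      exact h.smul_mem _ (by linarith) _ (interior_subset hb)
    have := h.eq_zero_of_mem_neg (interior_subset ha) hna
    exact h.ne_zero_of_interior ha this
  · exfalso
    apply h.ne_zero_of_interior ha
    rw [hab, hc, zero_smul]
  · exact hc


theorem u_ne_zero [Nontrivial V] : u ≠ 0 := by
  intro hu
  obtain ⟨v, w, hvw⟩ := exists_pair_ne V
  apply hvw
  have key : ∀ p : V, p ∈ C := by
    intro p
    obtain ⟨l, _, hm'⟩ := h.order_unit (-p)
    rw [hu] at hm'
    simpa using hm'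
  have : v - w = 0 := h.eq_zero_of_mem_neg (key _) (by simpa using key (w - v))
  rw [sub_eq_zero] at this
  exact this

end IsOrderUnitSpace

namespace IsOrderUnitSpace

variable {C : Set V} {u : V} (h : IsOrderUnitSpace C u)

theorem Mset_bddBelow (a b : V) : BddBelow {β : ℝ | 0 < β ∧ β • b - a ∈ C} :=
  ⟨0, fun l hl => hl.1.le⟩

theorem M_nonneg (a b : V) : 0 ≤ Mratio C a b :=
  Real.sInf_nonneg (fun β hβ => hβ.1.le)

include h

theorem Mset_nonempty {b : V} (hb : b ∈ interior C) (a : V) :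
    {β : ℝ | 0 < β ∧ β • b - a ∈ C}.Nonempty := by
  obtain ⟨ε, hε, hbe⟩ := h.mem_interior_iff.mp hb
  obtain ⟨l, hl0, hlm⟩ := h.order_unit a
  refine ⟨(l + 1) / ε, by positivity, ?_⟩
  have key : ((l + 1) / ε) • b - a
      = ((l + 1) / ε) • (b - ε • u) + (1:ℝ) • u + (l • u - a) := by
    have hε' : ε ≠ 0 := ne_of_gt hε
    match_scalars <;> (try field_simp) <;> (try ring)
  rw [key]
  exact h.add_mem (h.add_mem
    (h.smul_mem _ (by positivity) _ hbe)
    (h.smul_mem _ (by norm_num) _ h.unit_mem)) hlm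

omit h in
theorem M_le_mem {a b : V} {β : ℝ} (hβ : 0 < β) (hm : β • b - a ∈ C) :
    Mratio C a b ≤ β := csInf_le (Mset_bddBelow a b) ⟨hβ, hm⟩

theorem M_mem {b : V} (hb : b ∈ interior C) (a : V) :
    (Mratio C a b) • b - a ∈ C := by
  have hbC : b ∈ C := interior_subset hb
  have key : ∀ ε : ℝ, 0 < ε → (Mratio C a b + ε) • b - a ∈ C := by
    intro ε hε
    obtain ⟨β, hβmem, hβlt⟩ := exists_lt_of_csInf_lt (h.Mset_nonempty hb a)
      (show Mratio C a b < Mratio C a b + ε by linarith)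
    have : (Mratio C a b + ε) • b - a = (β • b - a) + (Mratio C a b + ε - β) • b := by
      module
    rw [this]
    exact h.add_mem hβmem.2 (h.smul_mem _ (by linarith) _ hbC)
  have htend : Tendsto (fun ε : ℝ => (Mratio C a b + ε) • b - a) (𝓝[>] (0:ℝ))
      (𝓝 ((Mratio C a b) • b - a)) := by
    have : Tendsto (fun ε : ℝ => (Mratio C a b + ε) • b - a) (𝓝 (0:ℝ))
        (𝓝 ((Mratio C a b + 0) • b - a)) := by
      apply Tendsto.sub_const
      apply Tendsto.smul_const
      exact (continuous_const.add continuous_id).tendsto 0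
    simpa using this.mono_left nhdsWithin_le_nhds
  exact h.isClosed.mem_of_tendsto htend
    (eventually_mem_nhdsWithin.mono (fun ε hε => key ε hε))

variable [Nontrivial V]

theorem M_pos {a b : V} (ha : a ∈ interior C) (hb : b ∈ interior C) :
    0 < Mratio C a b := by
  obtain ⟨δ, hδ, hδm⟩ := h.mem_interior_iff.mp ha
  have hΛm : (‖b‖ + 1) • u - b ∈ C := (h.norm_lt_mem (by linarith)).2
  set Λ : ℝ := ‖b‖ + 1 with hΛdef
  have hΛ0 : 0 < Λ := by positivity
  have hlow : ∀ β ∈ {β : ℝ | 0 < β ∧ β • b - a ∈ C}, δ / Λ ≤ β := by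
    intro β hβ
    by_contra hcon
    push_neg at hcon
    have hβΛ : β * Λ < δ := (lt_div_iff₀ hΛ0).mp hcon
    have hmem : (β * Λ - δ) • u ∈ C := by
      have : (β * Λ - δ) • u = β • (Λ • u - b) + (β • b - a) + (a - δ • u) := by
        module
      rw [this]
      exact h.add_mem (h.add_mem (h.smul_mem _ hβ.1.le _ hΛm) hβ.2) hδm
    have hmem2 : -((β * Λ - δ) • u) ∈ C := by
      have : -((β * Λ - δ) • u) = (δ - β * Λ) • u := by module
      rw [this]
      exact h.smul_mem _ (by linarith) _ h.unit_mem
    have := h.eq_zero_of_mem_neg hmem hmem2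
    rcases smul_eq_zero.mp this with h' | h'
    · linarith
    · exact h.u_ne_zero h'
  have h1 : δ / Λ ≤ Mratio C a b := le_csInf (h.Mset_nonempty hb a) hlow
  have h2 : 0 < δ / Λ := by positivity
  linarith

theorem M_self {a : V} (ha : a ∈ interior C) : Mratio C a a = 1 := by
  apply le_antisymm
  · exact M_le_mem (by norm_num) (by simpa using h.zero_mem)
  · apply le_csInf (h.Mset_nonempty ha a)
    intro β hβ
    by_contra hcon
    push_neg at hcon
    have h1 : -((1 - β) • a) ∈ C := by
      have : -((1 - β) • a) = β • a - a := by module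
      rw [this]; exact hβ.2
    have h2 : (1 - β) • a ∈ C := h.smul_mem _ (by linarith) _ (interior_subset ha)
    have := h.eq_zero_of_mem_neg h2 h1
    rcases smul_eq_zero.mp this with h' | h'
    · linarith
    · exact h.not_zero_interior (h' ▸ ha)

theorem M_submult {a b c : V} (ha : a ∈ interior C) (hb : b ∈ interior C)
    (hc : c ∈ interior C) :
    Mratio C a c ≤ Mratio C a b * Mratio C b c := by
  apply M_le_mem (mul_pos (h.M_pos ha hb) (h.M_pos hb hc))
  have key : (Mratio C a b * Mratio C b c) • c - a
      = Mratio C a b • (Mratio C b c • c - b) + (Mratio C a b • b - a) := by module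
  rw [key]
  exact h.add_mem (h.smul_mem _ (M_nonneg a b) _ (h.M_mem hc b)) (h.M_mem hb a)

theorem M_smul_left_le {a b : V} {c : ℝ} (hc : 0 < c) (ha : a ∈ interior C)
    (hb : b ∈ interior C) : Mratio C (c • a) b ≤ c * Mratio C a b := by
  apply M_le_mem (mul_pos hc (h.M_pos ha hb))
  have key : (c * Mratio C a b) • b - c • a = c • (Mratio C a b • b - a) := by module
  rw [key]
  exact h.smul_mem _ hc.le _ (h.M_mem hb a)

theorem M_smul_left {a b : V} {c : ℝ} (hc : 0 < c) (ha : a ∈ interior C)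
    (hb : b ∈ interior C) : Mratio C (c • a) b = c * Mratio C a b := by
  apply le_antisymm (h.M_smul_left_le hc ha hb)
  have h2 := h.M_smul_left_le (c := c⁻¹) (by positivity) (h.interior_smul hc ha) hb
  rw [smul_smul, inv_mul_cancel₀ (ne_of_gt hc), one_smul] at h2
  calc c * Mratio C a b ≤ c * (c⁻¹ * Mratio C (c • a) b) := by
        apply mul_le_mul_of_nonneg_left h2 hc.le
    _ = Mratio C (c • a) b := by field_simp

theorem M_proj {a b : V} (ha : a ∈ interior C) (hb : b ∈ interior C) :
    1 ≤ Mratio C a b * Mratio C b a := by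
  by_contra hcon
  push_neg at hcon
  have hp := h.M_mem hb a
  have hq := h.M_mem ha b
  have key : (Mratio C a b * Mratio C b a - 1) • a
      = Mratio C a b • (Mratio C b a • a - b) + (Mratio C a b • b - a) := by module
  have h1 : (Mratio C a b * Mratio C b a - 1) • a ∈ C := by
    rw [key]
    exact h.add_mem (h.smul_mem _ (M_nonneg a b) _ hq) hp
  have h2 : -((Mratio C a b * Mratio C b a - 1) • a) ∈ C := by
    have : -((Mratio C a b * Mratio C b a - 1) • a)
        = (1 - Mratio C a b * Mratio C b a) • a := by module
    rw [this]
    exact h.smul_mem _ (by linarith) _ (interior_subset ha)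
  have := h.eq_zero_of_mem_neg h1 h2
  rcases smul_eq_zero.mp this with h' | h'
  · linarith
  · exact h.not_zero_interior (h' ▸ ha)

theorem M_proj_eq {a b : V} (ha : a ∈ interior C) (hb : b ∈ interior C)
    (heq : Mratio C a b * Mratio C b a = 1) : a = Mratio C a b • b := by
  have hp := h.M_mem hb a
  have hq := h.M_mem ha b
  have key : Mratio C a b • (Mratio C b a • a - b) + (Mratio C a b • b - a)
      = (Mratio C a b * Mratio C b a - 1) • a := by module
  rw [heq] at key
  simp only [sub_self, zero_smul] at key
  have h2' : Mratio C a b • (Mratio C b a • a - b) = -(Mratio C a b • b - a) :=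
    eq_neg_of_add_eq_zero_left key
  have h2 : -(Mratio C a b • b - a) ∈ C := by
    rw [← h2']
    exact h.smul_mem _ (M_nonneg a b) _ hq
  have h0 := h.eq_zero_of_mem_neg hp h2
  rw [sub_eq_zero] at h0
  exact h0.symm

theorem M_frontier {a b : V} (ha : a ∈ interior C) (hb : b ∈ interior C) :
    (Mratio C a b) • b - a ∈ frontier C := by
  rw [h.isClosed.frontier_eq]
  refine ⟨h.M_mem hb a, ?_⟩
  intro hint
  obtain ⟨ε₀, hε₀, hpm⟩ := h.mem_interior_iff.mp hint
  have hΛm : (‖b‖ + 1) • u - b ∈ C := (h.norm_lt_mem (by linarith)).2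
  set Λ : ℝ := ‖b‖ + 1 with hΛdef
  have hΛ0 : 0 < Λ := by positivity
  set η : ℝ := min (ε₀ / Λ) (Mratio C a b / 2) with hηdef
  have hM := h.M_pos ha hb
  have hη0 : 0 < η := lt_min (by positivity) (by positivity)
  have hηM : η < Mratio C a b := lt_of_le_of_lt (min_le_right _ _) (by linarith)
  have hηΛ : η * Λ ≤ ε₀ := by
    calc η * Λ ≤ (ε₀ / Λ) * Λ := mul_le_mul_of_nonneg_right (min_le_left _ _) hΛ0.le
      _ = ε₀ := by field_simp
  have hmem : (Mratio C a b - η) • b - a ∈ C := by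
    have key : (Mratio C a b - η) • b - a
        = ((Mratio C a b • b - a) - ε₀ • u) + (η • (Λ • u - b) + (ε₀ - η * Λ) • u) := by
      module
    rw [key]
    exact h.add_mem hpm (h.add_mem
      (h.smul_mem _ hη0.le _ hΛm) (h.smul_mem _ (by linarith) _ h.unit_mem))
  have := M_le_mem (C := C) (a := a) (b := b) (by linarith) hmem
  linarith

theorem SEG1 {a b m : V} (ha : a ∈ interior C) (hb : b ∈ interior C)
    (hm : m ∈ interior C) {lam nu : ℝ} (hl : 0 ≤ lam) (hn : 0 ≤ nu)
    (hme : m = lam • a + nu • b) :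
    Mratio C a b = Mratio C a m * Mratio C m b := by
  set β := Mratio C a b with hβdef
  have hβ : 0 < β := h.M_pos ha hb
  have hlv : lam > 0 ∨ nu > 0 := by
    by_contra hcon
    push_neg at hcon
    have hl0 : lam = 0 := le_antisymm hcon.1 hl
    have hn0 : nu = 0 := le_antisymm hcon.2 hn
    rw [hl0, hn0] at hme
    simp at hme
    exact h.not_zero_interior (hme ▸ hm)
  have hκ : 0 < lam * β + nu := by
    rcases hlv with h' | h'
    · have : 0 < lam * β := mul_pos h' hβ
      linarith
    · linarith [mul_nonneg hl hβ.le]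
  set κ := lam * β + nu with hκdef
  have u1 : Mratio C a m ≤ β / κ := by
    apply M_le_mem (div_pos hβ hκ)
    have key : (β / κ) • m - a = (nu / κ) • (β • b - a) := by
      rw [hme, hκdef]
      have hκ' : lam * β + nu ≠ 0 := ne_of_gt hκ
      have hκ'' : β * lam + nu ≠ 0 := by rw [mul_comm]; exact hκ'
      match_scalars <;> (try field_simp) <;> (try ring)
    rw [key]
    exact h.smul_mem _ (by positivity) _ (h.M_mem hb a)
  have u2 : Mratio C m b ≤ κ := by
    apply M_le_mem hκ
    have key : κ • b - m = lam • (β • b - a) := by rw [hme, hκdef]; module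
    rw [key]
    exact h.smul_mem _ hl _ (h.M_mem hb a)
  apply le_antisymm
  · exact h.M_submult ha hm hb
  · calc Mratio C a m * Mratio C m b ≤ (β / κ) * κ :=
          mul_le_mul u1 u2 (M_nonneg m b) (by positivity)
      _ = β := by field_simp

end IsOrderUnitSpace

namespace IsOrderUnitSpace

variable {V : Type*} [NormedAddCommGroup V] [NormedSpace ℝ V]
variable {C : Set V} {u : V} (h : IsOrderUnitSpace C u)

include h

theorem frontier_smul {w : V} {c : ℝ} (hc : 0 < c) (hw : w ∈ frontier C) :
    c • w ∈ frontier C := by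
  rw [h.isClosed.frontier_eq] at hw ⊢
  refine ⟨h.smul_mem _ hc.le _ hw.1, fun hint => hw.2 ?_⟩
  have := h.interior_smul (c := c⁻¹) (by positivity) hint
  rwa [smul_smul, inv_mul_cancel₀ (ne_of_gt hc), one_smul] at this

theorem neg_interior_absurd [Nontrivial V] {m : V} (hm : m ∈ interior C)
    (hneg : -m ∈ C) : False := by
  have := h.eq_zero_of_mem_neg (interior_subset hm) hneg
  exact h.not_zero_interior (this ▸ hm)

variable [Nontrivial V]

theorem coplanar_of_eq (hsc : StrictlyConvexCone C) {a b m : V}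
    (ha : a ∈ interior C) (hb : b ∈ interior C) (hm : m ∈ interior C)
    (hab : LinearIndependent ℝ ![a, b])
    (heq : Mratio C a b = Mratio C a m * Mratio C m b) :
    m ∈ Submodule.span ℝ {a, b} := by
  set α := Mratio C a m with hαd
  set γ := Mratio C m b with hγd
  set P := α • m - a with hPdef
  set Q := γ • b - m with hQdef
  have hMam : 0 < α := h.M_pos ha hm
  have hMmb : 0 < γ := h.M_pos hm hb
  have hP : P ∈ frontier C := by rw [hPdef, hαd]; exact h.M_frontier ha hm
  have hQ : Q ∈ frontier C := by rw [hQdef, hγd]; exact h.M_frontier hm hb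
  have hQ2 : α • Q ∈ frontier C := h.frontier_smul hMam hQ
  have hr : Mratio C a b • b - a ∈ frontier C := h.M_frontier ha hb
  have hsum : P + α • Q = Mratio C a b • b - a := by
    rw [hPdef, hQdef, heq]; module
  by_cases hLI : LinearIndependent ℝ ![P, α • Q]
  · exfalso
    have hmid : (1/2 : ℝ) • P + (1/2 : ℝ) • (α • Q)
        ∈ openSegment ℝ P (α • Q) :=
      ⟨1/2, 1/2, by norm_num, by norm_num, by norm_num, rfl⟩
    have hmint := hsc P hP (α • Q) hQ2 hLI hmid
    have h2int := h.interior_smul (c := 2) (by norm_num) hmint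
    have : (2:ℝ) • ((1/2 : ℝ) • P + (1/2 : ℝ) • (α • Q))
        = Mratio C a b • b - a := by rw [← hsum]; module
    rw [this] at h2int
    rw [h.isClosed.frontier_eq] at hr
    exact hr.2 h2int
  · rw [LinearIndependent.pair_iff] at hLI
    push_neg at hLI
    obtain ⟨s, t, hst, hne⟩ := hLI
    rw [Submodule.mem_span_pair]
    by_cases ht : t = 0
    · have hs : s ≠ 0 := by
        intro hs0; exact hne hs0 ht
      rw [ht, zero_smul, add_zero, smul_eq_zero] at hst
      rcases hst with h' | h'
      · exact absurd h' hs
      · -- P = 0 : a = Mam • m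
        obtain ⟨r, hr0, hra⟩ : ∃ r : ℝ, 0 < r ∧ a = r • m := by
          refine ⟨α, hMam, ?_⟩
          rw [hPdef] at h'
          exact (sub_eq_zero.mp h').symm
        exact ⟨r⁻¹, 0, by
          rw [hra, smul_smul, inv_mul_cancel₀ (ne_of_gt hr0), one_smul, zero_smul,
            add_zero]⟩
    · by_cases hs : s = 0
      · rw [hs, zero_smul, zero_add, smul_smul, smul_eq_zero] at hst
        rcases hst with h' | h'
        · rcases mul_eq_zero.mp h' with h'' | h''
          · exact absurd h'' ht
          · exact absurd h'' (ne_of_gt hMam)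
        · obtain ⟨r, hra⟩ : ∃ r : ℝ, m = r • b := by
            refine ⟨γ, ?_⟩
            rw [hQdef] at h'
            exact (sub_eq_zero.mp h').symm
          exact ⟨0, r, by rw [zero_smul, zero_add, hra]⟩
      · by_cases hstt : s = t
        · exfalso
          -- then a parallel to b, contradicting hab
          have key : s • a = (s * (α * γ)) • b := by
            have : s • P + t • (α • Q) = s • ((α * γ) • b - a) := by
              rw [hPdef, hQdef, hstt]; module
            rw [this] at hst
            have h2 := sub_eq_zero.mp (by
              have : s • ((α * γ) • b - a)
                  = (s * (α * γ)) • b - s • a := by module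
              rw [this] at hst
              exact hst)
            exact h2.symm
          have := (LinearIndependent.pair_iff.mp hab) s (-(s * (α * γ)))
            (by rw [neg_smul, ← key]; module)
          exact hs this.1
        · have hD : (s - t) * α ≠ 0 :=
            mul_ne_zero (sub_ne_zero.mpr hstt) (ne_of_gt hMam)
          have hDm : ((s - t) * α) • m
              = s • a - (t * (α * γ)) • b := by
            have expand : s • P + t • (α • Q)
                = ((s - t) * α) • m - (s • a - (t * (α * γ)) • b) := by
              rw [hPdef, hQdef]; module
            rw [expand] at hst
            exact sub_eq_zero.mp hst
          refine ⟨(((s - t) * α)⁻¹) * s,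
            -((((s - t) * α)⁻¹) * (t * (α * γ))), ?_⟩
          have : m = (((s - t) * α)⁻¹) • (s • a - (t * (α * γ)) • b) := by
            rw [← hDm, smul_smul, inv_mul_cancel₀ hD, one_smul]
          rw [this]
          module

theorem trichotomy {a b m : V} (ha : a ∈ interior C) (hb : b ∈ interior C)
    (hm : m ∈ interior C) (hmem : m ∈ Submodule.span ℝ {a, b}) :
    (∃ l n : ℝ, 0 ≤ l ∧ 0 ≤ n ∧ m = l • a + n • b) ∨
    (∃ l n : ℝ, 0 ≤ l ∧ 0 ≤ n ∧ a = l • m + n • b) ∨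
    (∃ l n : ℝ, 0 ≤ l ∧ 0 ≤ n ∧ b = l • a + n • m) := by
  obtain ⟨c₁, c₂, hc⟩ := Submodule.mem_span_pair.mp hmem
  rcases le_or_gt 0 c₁ with h1 | h1 <;> rcases le_or_gt 0 c₂ with h2 | h2
  · exact Or.inl ⟨c₁, c₂, h1, h2, hc.symm⟩
  · -- c₁ ≥ 0, c₂ < 0
    rcases eq_or_lt_of_le h1 with h1' | h1'
    · exfalso
      apply h.neg_interior_absurd hm
      have : -m = (-c₂) • b := by rw [← hc, ← h1']; module
      rw [this]
      exact h.smul_mem _ (by linarith) _ (interior_subset hb)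
    · refine Or.inr (Or.inl ⟨c₁⁻¹, -c₂ / c₁, inv_nonneg.mpr h1'.le,
        div_nonneg (by linarith) h1'.le, ?_⟩)
      rw [← hc]
      have hc₁ : c₁ ≠ 0 := ne_of_gt h1'
      match_scalars <;> field_simp <;> ring
  · -- c₁ < 0, c₂ ≥ 0
    rcases eq_or_lt_of_le h2 with h2' | h2'
    · exfalso
      apply h.neg_interior_absurd hm
      have : -m = (-c₁) • a := by rw [← hc, ← h2']; module
      rw [this]
      exact h.smul_mem _ (by linarith) _ (interior_subset ha)
    · refine Or.inr (Or.inr ⟨-c₁ / c₂, c₂⁻¹, div_nonneg (by linarith) h2'.le,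
        inv_nonneg.mpr h2'.le, ?_⟩)
      rw [← hc]
      have hc₂ : c₂ ≠ 0 := ne_of_gt h2'
      match_scalars <;> field_simp <;> ring
  · exfalso
    apply h.neg_interior_absurd hm
    have : -m = (-c₁) • a + (-c₂) • b := by rw [← hc]; module
    rw [this]
    exact h.add_mem (h.smul_mem _ (by linarith) _ (interior_subset ha))
      (h.smul_mem _ (by linarith) _ (interior_subset hb))

end IsOrderUnitSpace

set_option maxHeartbeats 4000000

/-- **Theorem** (symmetries). The symmetry `S_x = G_x⁻¹ ∘ g` satisfies
`S_x x = x` and `S_x ∘ S_x = Id` on `C°`. -/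
theorem symmetry_fixes_and_involutive
    (C : Set V) (u : V) (hous : IsOrderUnitSpace C u) (hsc : StrictlyConvexCone C)
    (g : V → V) (hbij : Set.BijOn g (interior C) (interior C))
    (hanti : IsAntihomogeneous C g) (hmor : IsOrderAntimorphism C g)
    (x : V) (hx : x ∈ interior C)
    (G : V ≃ₗ[ℝ] V)
    (hG : ∀ z : V, Tendsto (fun t : ℝ => t⁻¹ • (g (x + t • z) - g x))
      (𝓝[≠] (0:ℝ)) (𝓝 (-(G z)))) :
    G.symm (g x) = x ∧ ∀ y ∈ interior C, G.symm (g (G.symm (g y))) = y := by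

  -- Part 1 : G x = g x
  have hGx : G x = g x := by
    have h1 : Tendsto (fun t : ℝ => t⁻¹ • (g (x + t • x) - g x)) (𝓝[≠] (0:ℝ))
        (𝓝 (-(g x))) := by
      have heq : ∀ᶠ t : ℝ in 𝓝[≠] (0:ℝ),
          (-(1 + t)⁻¹) • g x = t⁻¹ • (g (x + t • x) - g x) := by
        have hev : ∀ᶠ t : ℝ in 𝓝 (0:ℝ), |t - 0| < 1/2 :=
          eventually_abs_sub_lt 0 (by norm_num)
        filter_upwards [eventually_nhdsWithin_of_eventually_nhds hev,
          self_mem_nhdsWithin] with t ht htne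
        have htne' : t ≠ 0 := htne
        have ht2 : (0:ℝ) < 1 + t := by
          rw [sub_zero] at ht
          have := abs_lt.mp ht
          linarith [this.1]
        have hxx : x + t • x = (1 + t) • x := by module
        rw [hxx, hanti (1 + t) ht2 x hx]
        have h1t : (1:ℝ) + t ≠ 0 := ne_of_gt ht2
        match_scalars
        field_simp
        ring
      have hlim : Tendsto (fun t : ℝ => (-(1 + t)⁻¹) • g x) (𝓝[≠] (0:ℝ))
          (𝓝 (-(g x))) := by
        have hc : Tendsto (fun t : ℝ => -(1 + t)⁻¹) (𝓝 (0:ℝ)) (𝓝 (-(1:ℝ))) := by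
          have h1 : Tendsto (fun t : ℝ => 1 + t) (𝓝 (0:ℝ)) (𝓝 ((1:ℝ)+0)) :=
            (continuous_const.add continuous_id).tendsto (0:ℝ)
          rw [add_zero] at h1
          have h2 := (h1.inv₀ (by norm_num)).neg
          norm_num at h2
          exact h2.neg
        have h3 := hc.smul_const (g x)
        rw [show ((-1:ℝ)) • g x = -(g x) by module] at h3
        exact h3.mono_left nhdsWithin_le_nhds
      exact hlim.congr' heq
    have h2 := hG x
    have h3 := tendsto_nhds_unique h2 h1
    exact neg_injective h3
  have hfix : G.symm (g x) = x := by rw [← hGx, LinearEquiv.symm_apply_apply]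
  rcases subsingleton_or_nontrivial V with hV | hV
  · exact ⟨hfix, fun y _ => Subsingleton.elim _ _⟩
  refine ⟨hfix, ?_⟩
  have hgx : g x ∈ interior C := hbij.mapsTo hx
  -- the inverse of g on the interior
  set gi : V → V := Function.invFunOn g (interior C) with hgidef
  have hgi_maps : Set.MapsTo gi (interior C) (interior C) := hbij.surjOn.mapsTo_invFunOn
  have hgi_left : ∀ p ∈ interior C, gi (g p) = p := fun p hp => hbij.invOn_invFunOn.1 hp
  have hgi_right : ∀ p ∈ interior C, g (gi p) = p := fun p hp => hbij.invOn_invFunOn.2 hp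
  -- swap characterization
  have swap_iff : ∀ a ∈ interior C, ∀ b ∈ interior C, ∀ β : ℝ, 0 < β →
      (β • b - a ∈ C ↔ β • g a - g b ∈ C) := by
    intro a ha b hb β hβ
    have hβb : β • b ∈ interior C := hous.interior_smul hβ hb
    have h1 := hmor a ha (β • b) hβb
    rw [hanti β hβ b hb] at h1
    constructor
    · intro hm
      have h2 := h1.mp hm
      have h3 := hous.smul_mem β hβ.le _ h2
      have hβ' : β ≠ 0 := ne_of_gt hβ
      have h4 : β • (g a - β⁻¹ • g b) = β • g a - g b := by
        match_scalars <;> field_simp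
      rwa [h4] at h3
    · intro hm
      apply h1.mpr
      have h3 := hous.smul_mem β⁻¹ (by positivity) _ hm
      have hβ' : β ≠ 0 := ne_of_gt hβ
      have h4 : β⁻¹ • (β • g a - g b) = g a - β⁻¹ • g b := by
        match_scalars <;> field_simp
      rwa [h4] at h3
  -- DGINV : derivative of the inverse map along rays at x
  have DGINV : ∀ w : V, Tendsto (fun t : ℝ => t⁻¹ • (gi (g x + t • w) - x))
      (𝓝[>] (0:ℝ)) (𝓝 (-(G.symm w))) := by
    intro w
    set v : V := -(G.symm w) with hvdef
    have hGv : G v = -w := by rw [hvdef, map_neg, G.apply_symm_apply]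
    obtain ⟨δ₀, hδ₀, hδ₀m⟩ := hous.mem_interior_iff.mp hgx
    set R : ℝ := ‖x‖ + ‖v‖ + 1 with hRd
    have hR0 : (0:ℝ) < R := by rw [hRd]; positivity
    set ε : ℝ → V := fun t => t⁻¹ • (g (x + t • v) - g x) + G v with hεdef
    have hIoi : Set.Ioi (0:ℝ) ⊆ {(0:ℝ)}ᶜ := fun t ht => ne_of_gt ht
    have hmono : 𝓝[>] (0:ℝ) ≤ 𝓝[≠] (0:ℝ) := nhdsWithin_mono 0 hIoi
    have hεt : Tendsto ε (𝓝[>] (0:ℝ)) (𝓝 0) := by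
      have h1 := ((hG v).mono_left hmono).add_const (G v)
      rw [neg_add_cancel] at h1
      exact h1
    have hkey : ∀ t : ℝ, 0 < t → g (x + t • v) = g x + t • w + t • ε t := by
      intro t ht
      have hne : t ≠ 0 := ne_of_gt ht
      have hstep : t • ε t = (g (x + t • v) - g x) + t • G v := by
        rw [hεdef]
        simp only
        rw [smul_add, smul_smul, mul_inv_cancel₀ hne, one_smul]
      rw [hstep, hGv]
      module
    have htto : Tendsto (fun t : ℝ => t) (𝓝[>] (0:ℝ)) (𝓝 (0:ℝ)) :=
      tendsto_id.mono_left nhdsWithin_le_nhds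
    have ev1 : ∀ᶠ t : ℝ in 𝓝[>] (0:ℝ), x + t • v ∈ interior C := by
      have hco : Tendsto (fun t : ℝ => x + t • v) (𝓝[>] (0:ℝ)) (𝓝 (x + (0:ℝ) • v)) :=
        (htto.smul_const v).const_add x
      rw [zero_smul, add_zero] at hco
      exact hco.eventually (isOpen_interior.eventually_mem hx)
    have ev2 : ∀ᶠ t : ℝ in 𝓝[>] (0:ℝ), ‖t • w‖ < δ₀ / 2 := by
      have h1 : Tendsto (fun t : ℝ => ‖t • w‖) (𝓝[>] 0) (𝓝 ‖(0:ℝ) • w‖) :=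
        (htto.smul_const w).norm
      rw [zero_smul, norm_zero] at h1
      exact h1.eventually_lt_const (by positivity)
    have ev3 : ∀ᶠ t : ℝ in 𝓝[>] (0:ℝ), ‖t • ε t‖ < δ₀ / 4 := by
      have h1 : Tendsto (fun t : ℝ => t • ε t) (𝓝[>] 0) (𝓝 ((0:ℝ) • (0:V))) :=
        htto.smul hεt
      rw [zero_smul] at h1
      have h2 := h1.norm
      rw [norm_zero] at h2
      exact h2.eventually_lt_const (by positivity)
    have ev4 : ∀ᶠ t : ℝ in 𝓝[>] (0:ℝ), (4 / δ₀) * (t * ‖ε t‖ + t ^ 2) ≤ 1 := by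
      have h1 : Tendsto (fun t : ℝ => (4 / δ₀) * (t * ‖ε t‖ + t ^ 2)) (𝓝[>] 0)
          (𝓝 ((4 / δ₀) * (0 * ‖(0:V)‖ + 0 ^ 2))) :=
        ((htto.mul hεt.norm).add (htto.pow 2)).const_mul _
      norm_num at h1
      exact h1.eventually_le_const (by norm_num)
    have ev5 : Set.Ioc (0:ℝ) 1 ∈ 𝓝[>] (0:ℝ) :=
      Ioc_mem_nhdsGT_of_mem ⟨le_refl 0, zero_lt_one⟩
    have hbound : ∀ᶠ t : ℝ in 𝓝[>] (0:ℝ),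
        ‖t⁻¹ • (gi (g x + t • w) - x) - v‖ ≤ 8 * R / δ₀ * (‖ε t‖ + t) := by
      filter_upwards [ev1, ev2, ev3, ev4, ev5] with t h1 h2 h3 h4 h5
      have ht : 0 < t := h5.1
      have ht1 : t ≤ 1 := h5.2
      have htne : t ≠ 0 := ne_of_gt ht
      set P : V := g x + t • w with hPd
      set Q : V := g (x + t • v) with hQd
      have hQP : Q = P + t • ε t := by rw [hQd, hPd, hkey t ht]
      have hP2 : P - (δ₀ / 2) • u ∈ C := by
        have hm2 : t • w + (δ₀ / 2) • u ∈ C := (hous.norm_lt_mem h2).1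
        have hrep : P - (δ₀ / 2) • u = (g x - δ₀ • u) + (t • w + (δ₀ / 2) • u) := by
          rw [hPd]; module
        rw [hrep]; exact hous.add_mem hδ₀m hm2
      have hPi : P ∈ interior C := hous.mem_interior_iff.mpr ⟨δ₀ / 2, by positivity, hP2⟩
      have hQi : Q ∈ interior C := hbij.mapsTo h1
      have hQ4 : Q - (δ₀ / 4) • u ∈ C := by
        have hm3 : t • ε t + (δ₀ / 4) • u ∈ C := (hous.norm_lt_mem h3).1
        have hrep : Q - (δ₀ / 4) • u = (P - (δ₀ / 2) • u) + (t • ε t + (δ₀ / 4) • u) := by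
          rw [hQP]; module
        rw [hrep]; exact hous.add_mem hP2 hm3
      set η : ℝ := (4 / δ₀) * (t * ‖ε t‖ + t ^ 2) with hηd
      have htsq : 0 < t ^ 2 := by positivity
      have htε : 0 ≤ t * ‖ε t‖ := mul_nonneg ht.le (norm_nonneg _)
      have hη0 : 0 < η := by
        rw [hηd]
        apply mul_pos (by positivity) (by nlinarith)
      have hη1 : η ≤ 1 := h4
      have hntε : ‖t • ε t‖ = t * ‖ε t‖ := by
        rw [norm_smul, Real.norm_eq_abs, abs_of_pos ht]
      have hδ₀' : δ₀ ≠ 0 := ne_of_gt hδ₀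
      have hc1 : (1 + η) • P - Q ∈ C := by
        have hl : ‖t • ε t‖ < η * (δ₀ / 2) := by
          rw [hntε]
          have hrep : η * (δ₀ / 2) = 2 * (t * ‖ε t‖ + t ^ 2) := by
            rw [hηd]; field_simp; ring
          rw [hrep]; nlinarith
        have hm := (hous.norm_lt_mem hl).2
        have hrep : (1 + η) • P - Q = η • (P - (δ₀ / 2) • u) + ((η * (δ₀ / 2)) • u - t • ε t) := by
          rw [hQP]; module
        rw [hrep]; exact hous.add_mem (hous.smul_mem _ hη0.le _ hP2) hm
      have hc2 : (1 + η) • Q - P ∈ C := by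
        have hl : ‖t • ε t‖ < η * (δ₀ / 4) := by
          rw [hntε]
          have hrep : η * (δ₀ / 4) = t * ‖ε t‖ + t ^ 2 := by
            rw [hηd]; field_simp
          rw [hrep]; nlinarith
        have hm := (hous.norm_lt_mem hl).1
        have hrep : (1 + η) • Q - P = η • (Q - (δ₀ / 4) • u) + (t • ε t + (η * (δ₀ / 4)) • u) := by
          rw [hQP]; module
        rw [hrep]; exact hous.add_mem (hous.smul_mem _ hη0.le _ hQ4) hm
      set yt : V := gi P with hytd
      have hyti : yt ∈ interior C := hgi_maps hPi
      have hgyt : g yt = P := hgi_right P hPi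
      have h1η : (0:ℝ) < 1 + η := by linarith
      have tr1 : (1 + η) • (x + t • v) - yt ∈ C := by
        apply (swap_iff yt hyti (x + t • v) h1 (1 + η) h1η).mpr
        rw [hgyt, ← hQd]
        exact hc1
      have tr2 : (1 + η) • yt - (x + t • v) ∈ C := by
        apply (swap_iff (x + t • v) h1 yt hyti (1 + η) h1η).mpr
        rw [hgyt, ← hQd]
        exact hc2
      have hsnorm : ‖x + t • v‖ < R := by
        have hnv : 0 ≤ ‖v‖ := norm_nonneg v
        calc ‖x + t • v‖ ≤ ‖x‖ + ‖t • v‖ := norm_add_le _ _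
          _ = ‖x‖ + t * ‖v‖ := by rw [norm_smul, Real.norm_eq_abs, abs_of_pos ht]
          _ ≤ ‖x‖ + ‖v‖ := by nlinarith
          _ < R := by rw [hRd]; linarith
      have hsR : R • u - (x + t • v) ∈ C := (hous.norm_lt_mem hsnorm).2
      have hw1 : (η * (1 + η) * R) • u - (yt - (x + t • v)) ∈ C := by
        have hrep : (η * (1 + η) * R) • u - (yt - (x + t • v))
            = ((1 + η) • (x + t • v) - yt)
              + η • ((R • u - (x + t • v)) + (η * R) • u) := by module
        rw [hrep]
        exact hous.add_mem tr1 (hous.smul_mem _ hη0.le _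
          (hous.add_mem hsR (hous.smul_mem _ (mul_nonneg hη0.le hR0.le) _ hous.unit_mem)))
      have hinner : (yt - (x + t • v)) + (η * (1 + η)) • (x + t • v) ∈ C := by
        have h1η' : (1:ℝ) + η ≠ 0 := ne_of_gt h1η
        have hrep : (yt - (x + t • v)) + (η * (1 + η)) • (x + t • v)
            = (1 + η)⁻¹ • (((1 + η) • yt - (x + t • v))
              + (2 * η ^ 2 + η ^ 3) • (x + t • v)) := by
          match_scalars <;> field_simp <;> ring
        rw [hrep]
        exact hous.smul_mem _ (by positivity) _ (hous.add_mem tr2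
          (hous.smul_mem _ (by nlinarith [sq_nonneg η, mul_nonneg hη0.le (sq_nonneg η)]) _
            (interior_subset h1)))
      have hw2 : (yt - (x + t • v)) + (η * (1 + η) * R) • u ∈ C := by
        have hrep : (yt - (x + t • v)) + (η * (1 + η) * R) • u
            = ((yt - (x + t • v)) + (η * (1 + η)) • (x + t • v))
              + (η * (1 + η)) • (R • u - (x + t • v)) := by module
        rw [hrep]
        exact hous.add_mem hinner (hous.smul_mem _ (mul_nonneg hη0.le h1η.le) _ hsR)
      have hnle : ‖yt - (x + t • v)‖ ≤ η * (1 + η) * R :=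
        hous.norm_le_of (mul_nonneg (mul_nonneg hη0.le h1η.le) hR0.le) hw1 hw2
      have heq2 : t⁻¹ • (yt - x) - v = t⁻¹ • (yt - (x + t • v)) := by
        match_scalars <;> field_simp
      rw [heq2, norm_smul, Real.norm_eq_abs, abs_of_pos (by positivity : (0:ℝ) < t⁻¹)]
      have hid : t⁻¹ * η = 4 / δ₀ * (‖ε t‖ + t) := by
        rw [hηd]; field_simp
      calc t⁻¹ * ‖yt - (x + t • v)‖ ≤ t⁻¹ * (η * (1 + η) * R) := by
            apply mul_le_mul_of_nonneg_left hnle (by positivity)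
        _ = (t⁻¹ * η) * ((1 + η) * R) := by ring
        _ = (4 / δ₀ * (‖ε t‖ + t)) * ((1 + η) * R) := by rw [hid]
        _ ≤ (4 / δ₀ * (‖ε t‖ + t)) * (2 * R) := by
            apply mul_le_mul_of_nonneg_left ?_ (by positivity)
            apply mul_le_mul_of_nonneg_right (by linarith) hR0.le
        _ = 8 * R / δ₀ * (‖ε t‖ + t) := by ring
    rw [← tendsto_sub_nhds_zero_iff]
    apply squeeze_zero_norm' hbound
    have h1 := (hεt.norm.add htto).const_mul (8 * R / δ₀)
    norm_num at h1
    exact h1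
  -- the linear map G and its inverse preserve the cone
  have hIoi : Set.Ioi (0:ℝ) ⊆ {(0:ℝ)}ᶜ := fun t ht => ne_of_gt ht
  have hmono : 𝓝[>] (0:ℝ) ≤ 𝓝[≠] (0:ℝ) := nhdsWithin_mono 0 hIoi
  have hGC : ∀ w ∈ C, G w ∈ C := by
    intro w hw
    have hmem : ∀ t : ℝ, 0 < t → t⁻¹ • (g (x + t • w) - g x) ∈ -C := by
      intro t ht
      have hxt : x + t • w ∈ interior C :=
        hous.interior_add_mem hx (hous.smul_mem t ht.le _ hw)
      have h1 : g x - g (x + t • w) ∈ C := by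
        apply (hmor x hx (x + t • w) hxt).mp
        have : x + t • w - x = t • w := by module
        rw [this]
        exact hous.smul_mem t ht.le _ hw
      rw [Set.mem_neg]
      have hrep : -(t⁻¹ • (g (x + t • w) - g x)) = t⁻¹ • (g x - g (x + t • w)) := by
        module
      rw [hrep]
      exact hous.smul_mem _ (by positivity) _ h1
    have hten := (hG w).mono_left hmono
    have hcl : IsClosed (-C) := hous.isClosed.neg
    have hlim : -(G w) ∈ -C :=
      hcl.mem_of_tendsto hten (eventually_mem_nhdsWithin.mono (fun t ht => hmem t ht))
    rwa [Set.mem_neg, neg_neg] at hlim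
  have hGsC : ∀ w ∈ C, G.symm w ∈ C := by
    intro w hw
    have hmem : ∀ t : ℝ, 0 < t → t⁻¹ • (gi (g x + t • w) - x) ∈ -C := by
      intro t ht
      have hP : g x + t • w ∈ interior C :=
        hous.interior_add_mem hgx (hous.smul_mem t ht.le _ hw)
      have hyt : gi (g x + t • w) ∈ interior C := hgi_maps hP
      have h1 : x - gi (g x + t • w) ∈ C := by
        apply (hmor (gi (g x + t • w)) hyt x hx).mpr
        rw [hgi_right _ hP]
        have : g x + t • w - g x = t • w := by module
        rw [this]
        exact hous.smul_mem t ht.le _ hw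
      rw [Set.mem_neg]
      have hrep : -(t⁻¹ • (gi (g x + t • w) - x)) = t⁻¹ • (x - gi (g x + t • w)) := by
        module
      rw [hrep]
      exact hous.smul_mem _ (by positivity) _ h1
    have hcl : IsClosed (-C) := hous.isClosed.neg
    have hlim : -(G.symm w) ∈ -C :=
      hcl.mem_of_tendsto (DGINV w) (eventually_mem_nhdsWithin.mono (fun t ht => hmem t ht))
    rwa [Set.mem_neg, neg_neg] at hlim
  have hGiff : ∀ w : V, w ∈ C ↔ G w ∈ C := by
    intro w
    refine ⟨hGC w, fun hw => ?_⟩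
    have := hGsC _ hw
    rwa [G.symm_apply_apply] at this
  have hGsiff : ∀ w : V, w ∈ C ↔ G.symm w ∈ C := by
    intro w
    refine ⟨hGsC w, fun hw => ?_⟩
    have := hGC _ hw
    rwa [G.apply_symm_apply] at this
  -- continuity of G.symm
  have hGs_bound : ∀ p : V, ‖G.symm p‖ ≤ (‖G.symm u‖ + 1) * ‖p‖ := by
    intro p
    set K : ℝ := ‖G.symm u‖ + 1 with hKd
    have hK0 : 0 < K := by rw [hKd]; positivity
    have hKu : K • u - G.symm u ∈ C := (hous.norm_lt_mem (by rw [hKd]; linarith)).2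
    apply le_of_forall_pos_le_add
    intro δ hδ
    set c' : ℝ := ‖p‖ + δ / K with hc'd
    have hpc : ‖p‖ < c' := by rw [hc'd]; have : 0 < δ / K := by positivity
                              linarith
    have h1 := (hous.norm_lt_mem hpc).2
    have h2 := (hous.norm_lt_mem hpc).1
    have h3 := hGsC _ h1
    have h4 := hGsC _ h2
    rw [map_sub, map_smul] at h3
    rw [map_add, map_smul] at h4
    have hcpos : 0 ≤ c' := by rw [hc'd]; positivity
    have hm1 : (c' * K) • u - G.symm p ∈ C := by
      have hrep : (c' * K) • u - G.symm p
          = c' • (K • u - G.symm u) + (c' • G.symm u - G.symm p) := by module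
      rw [hrep]
      exact hous.add_mem (hous.smul_mem _ hcpos _ hKu) h3
    have hm2 : G.symm p + (c' * K) • u ∈ C := by
      have hrep : G.symm p + (c' * K) • u
          = (G.symm p + c' • G.symm u) + c' • (K • u - G.symm u) := by module
      rw [hrep]
      exact hous.add_mem h4 (hous.smul_mem _ hcpos _ hKu)
    have := hous.norm_le_of (by positivity) hm1 hm2
    calc ‖G.symm p‖ ≤ c' * K := this
      _ = K * ‖p‖ + δ := by rw [hc'd]; field_simp
  have hGs_cont : Continuous (fun p : V => G.symm p) := by
    have := ((G.symm : V →ₗ[ℝ] V).mkContinuous _ hGs_bound).continuous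
    exact this
  -- G, G.symm preserve the interior
  have hGsint : ∀ q ∈ interior C, G.symm q ∈ interior C := by
    intro q hq
    obtain ⟨ε', hε', hqm⟩ := hous.mem_interior_iff.mp hq
    set Λ : ℝ := ‖G u‖ + 1 with hΛd
    have hΛ0 : 0 < Λ := by rw [hΛd]; positivity
    have hΛm : Λ • u - G u ∈ C := (hous.norm_lt_mem (by rw [hΛd]; linarith)).2
    refine hous.mem_interior_iff.mpr ⟨ε' / Λ, by positivity, ?_⟩
    have key : q - (ε' / Λ) • (G u) ∈ C := by
      have hΛ' : Λ ≠ 0 := ne_of_gt hΛ0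
      have hrep : q - (ε' / Λ) • (G u) = (q - ε' • u) + (ε' / Λ) • (Λ • u - G u) := by
        match_scalars <;> field_simp <;> ring
      rw [hrep]
      exact hous.add_mem hqm (hous.smul_mem _ (by positivity) _ hΛm)
    have := hGsC _ key
    rwa [map_sub, map_smul, G.symm_apply_apply] at this
  have hGint : ∀ q ∈ interior C, G q ∈ interior C := by
    intro q hq
    obtain ⟨ε', hε', hqm⟩ := hous.mem_interior_iff.mp hq
    set Λ : ℝ := ‖G.symm u‖ + 1 with hΛd
    have hΛ0 : 0 < Λ := by rw [hΛd]; positivity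
    have hΛm : Λ • u - G.symm u ∈ C := (hous.norm_lt_mem (by rw [hΛd]; linarith)).2
    refine hous.mem_interior_iff.mpr ⟨ε' / Λ, by positivity, ?_⟩
    have key : q - (ε' / Λ) • (G.symm u) ∈ C := by
      have hΛ' : Λ ≠ 0 := ne_of_gt hΛ0
      have hrep : q - (ε' / Λ) • (G.symm u) = (q - ε' • u) + (ε' / Λ) • (Λ • u - G.symm u) := by
        match_scalars <;> field_simp <;> ring
      rw [hrep]
      exact hous.add_mem hqm (hous.smul_mem _ (by positivity) _ hΛm)
    have := hGC _ key
    rwa [map_sub, map_smul, G.apply_symm_apply] at this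
  -- the symmetry S and its inverse T
  set S : V → V := fun p => G.symm (g p) with hSdef
  set T : V → V := fun p => gi (G p) with hTdef
  have hS_maps : ∀ p ∈ interior C, S p ∈ interior C := fun p hp => hGsint _ (hbij.mapsTo hp)
  have hT_maps : ∀ p ∈ interior C, T p ∈ interior C := fun p hp => hgi_maps (hGint _ hp)
  have hSx : S x = x := hfix
  have hTx : T x = x := by
    rw [hTdef]
    simp only
    rw [hGx]
    exact hgi_left x hx
  have hTS : ∀ p ∈ interior C, T (S p) = p := by
    intro p hp
    rw [hSdef, hTdef]
    simp only
    rw [G.apply_symm_apply]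
    exact hgi_left p hp
  have hST : ∀ p ∈ interior C, S (T p) = p := by
    intro p hp
    rw [hSdef, hTdef]
    simp only
    rw [hgi_right _ (hGint p hp), G.symm_apply_apply]
  have MS : ∀ a ∈ interior C, ∀ b ∈ interior C, Mratio C (S b) (S a) = Mratio C a b := by
    intro a ha b hb
    have hset : {β : ℝ | 0 < β ∧ β • (S a) - S b ∈ C} = {β : ℝ | 0 < β ∧ β • b - a ∈ C} := by
      ext β
      have hrepr : ∀ β : ℝ, β • (S a) - S b = G.symm (β • g a - g b) := by
        intro β; rw [hSdef]; simp only; rw [map_sub, map_smul]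
      constructor <;> rintro ⟨hβ, hm⟩ <;> refine ⟨hβ, ?_⟩
      · rw [hrepr β] at hm
        exact (swap_iff a ha b hb β hβ).mpr ((hGsiff _).mpr hm)
      · rw [hrepr β]
        exact (hGsiff _).mp ((swap_iff a ha b hb β hβ).mp hm)
    unfold Mratio
    rw [hset]
  have MT : ∀ a ∈ interior C, ∀ b ∈ interior C, Mratio C (T b) (T a) = Mratio C a b := by
    intro a ha b hb
    have hset : {β : ℝ | 0 < β ∧ β • (T a) - T b ∈ C} = {β : ℝ | 0 < β ∧ β • b - a ∈ C} := by
      ext β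
      constructor <;> rintro ⟨hβ, hm⟩ <;> refine ⟨hβ, ?_⟩
      · have h1 := (swap_iff (T b) (hT_maps b hb) (T a) (hT_maps a ha) β hβ).mp hm
        rw [hTdef] at h1
        simp only at h1
        rw [hgi_right _ (hGint b hb), hgi_right _ (hGint a ha)] at h1
        have h2 : β • G b - G a = G (β • b - a) := by rw [map_sub, map_smul]
        rw [h2] at h1
        exact (hGiff _).mpr h1
      · apply (swap_iff (T b) (hT_maps b hb) (T a) (hT_maps a ha) β hβ).mpr
        rw [hTdef]
        simp only
        rw [hgi_right _ (hGint b hb), hgi_right _ (hGint a ha)]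
        have h2 : β • G b - G a = G (β • b - a) := by rw [map_sub, map_smul]
        rw [h2]
        exact (hGiff _).mp hm
    unfold Mratio
    rw [hset]
  have hSh : ∀ c : ℝ, 0 < c → ∀ p ∈ interior C, S (c • p) = c⁻¹ • S p := by
    intro c hc p hp
    rw [hSdef]
    simp only
    rw [hanti c hc p hp, map_smul]
  have hTh : ∀ c : ℝ, 0 < c → ∀ p ∈ interior C, T (c • p) = c⁻¹ • T p := by
    intro c hc p hp
    rw [hTdef]
    simp only
    rw [map_smul]
    have hq := hGint p hp
    have hgq : c⁻¹ • gi (G p) ∈ interior C :=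
      hous.interior_smul (by positivity) (hgi_maps hq)
    have key : g (c⁻¹ • gi (G p)) = c • (G p) := by
      rw [hanti c⁻¹ (by positivity) _ (hgi_maps hq), inv_inv, hgi_right _ hq]
    rw [← key, hgi_left _ hgq]
  have hSinj : ∀ p ∈ interior C, ∀ q ∈ interior C, S p = S q → p = q := by
    intro p hp q hq hpq
    apply hbij.injOn hp hq
    rw [hSdef] at hpq
    simp only at hpq
    have := congrArg (fun z => G z) hpq
    simpa using this
  have hTinj : ∀ p ∈ interior C, ∀ q ∈ interior C, T p = T q → p = q := by
    intro p hp q hq hpq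
    rw [← hST p hp, ← hST q hq, hpq]
  have hSder : ∀ d : V, Tendsto (fun τ : ℝ => τ⁻¹ • (S (x + τ • d) - x))
      (𝓝[>] (0:ℝ)) (𝓝 (-d)) := by
    intro d
    have h2 := (hG d).mono_left hmono
    have h3 := (hGs_cont.tendsto (-(G d))).comp h2
    have h4 : G.symm (-(G d)) = -d := by simp
    rw [h4] at h3
    apply h3.congr
    intro τ
    simp only [Function.comp]
    rw [hSdef]
    simp only
    rw [map_smul, map_sub, hfix]
  have hTder : ∀ d : V, Tendsto (fun τ : ℝ => τ⁻¹ • (T (x + τ • d) - x))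
      (𝓝[>] (0:ℝ)) (𝓝 (-d)) := by
    intro d
    have h2 := DGINV (G d)
    rw [show G.symm (G d) = d from G.symm_apply_apply d] at h2
    apply h2.congr
    intro τ
    rw [hTdef]
    simp only
    rw [map_add, map_smul, hGx]
  -- the key geometric lemma, applied to both S and T
  have KEY : ∀ k : V → V, (∀ p ∈ interior C, k p ∈ interior C) → k x = x →
      (∀ a ∈ interior C, ∀ b ∈ interior C, Mratio C (k b) (k a) = Mratio C a b) →
      (∀ c : ℝ, 0 < c → ∀ p ∈ interior C, k (c • p) = c⁻¹ • k p) →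
      (∀ p ∈ interior C, ∀ q ∈ interior C, k p = k q → p = q) →
      ∀ y : V, y ∈ interior C → LinearIndependent ℝ ![x, y] →
      Tendsto (fun τ : ℝ => τ⁻¹ • (k (x + τ • (y - x)) - x)) (𝓝[>] (0:ℝ)) (𝓝 (-(y - x))) →
      ((∃ c : ℝ, 0 < c ∧ k y = c • y) ∨ (∃ a b : ℝ, b < 0 ∧ k y = a • x + b • y)) := by
    intro k hkmap hkx hkM hkh hkinj y hy hxy hkder
    have hky : k y ∈ interior C := hkmap y hy
    have hx0 : x ≠ 0 := hous.ne_zero_of_interior hx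
    have hy0 : y ≠ 0 := hous.ne_zero_of_interior hy
    have hfin2 := linearIndependent_fin2.mp hxy
    simp only [Matrix.cons_val_one, Matrix.head_cons, Matrix.cons_val_zero] at hfin2
    -- x and k y are linearly independent
    have hxky : LinearIndependent ℝ ![x, k y] := by
      rw [linearIndependent_fin2]
      simp only [Matrix.cons_val_one, Matrix.head_cons, Matrix.cons_val_zero]
      refine ⟨hous.ne_zero_of_interior hky, fun a hay => ?_⟩
      have ha0 : a ≠ 0 := by
        rintro rfl; rw [zero_smul] at hay; exact hx0 hay.symm
      have hkyx : k y = a⁻¹ • x := by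
        rw [← hay, smul_smul, inv_mul_cancel₀ ha0, one_smul]
      have hia : 0 < a⁻¹ := hous.pos_of_smul_eq hky hx hkyx
      have ha : 0 < a := by
        rcases lt_trichotomy a 0 with h' | h' | h'
        · exfalso; have : a⁻¹ < 0 := inv_lt_zero.mpr h'; linarith
        · exact absurd h' ha0
        · exact h'
      have hkk : k (a • x) = a⁻¹ • x := by rw [hkh a ha x hx, hkx]
      have hyax : y = a • x :=
        hkinj y hy (a • x) (hous.interior_smul ha hx) (by rw [hkk, hkyx])
      exact hfin2.2 a⁻¹ (by rw [hyax, smul_smul, inv_mul_cancel₀ ha0, one_smul])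
    -- coplanarity : y ∈ span {x, k y}
    set d : V := y - x with hdd
    have hspan : y ∈ Submodule.span ℝ ({x, k y} : Set V) := by
      haveI : FiniteDimensional ℝ (Submodule.span ℝ ({x, k y} : Set V)) :=
        FiniteDimensional.span_of_finite ℝ (Set.toFinite _)
      have hclosed : IsClosed ((Submodule.span ℝ ({x, k y} : Set V)) : Set V) :=
        Submodule.closed_of_finiteDimensional _
      have hxmem : x ∈ Submodule.span ℝ ({x, k y} : Set V) :=
        Submodule.subset_span (Set.mem_insert _ _)
      have hev : ∀ᶠ τ : ℝ in 𝓝[>] (0:ℝ),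
          τ⁻¹ • (k (x + τ • d) - x) ∈ ((Submodule.span ℝ ({x, k y} : Set V)) : Set V) := by
        have hIoc : Set.Ioc (0:ℝ) 1 ∈ 𝓝[>] (0:ℝ) :=
          Ioc_mem_nhdsGT_of_mem ⟨le_refl 0, zero_lt_one⟩
        filter_upwards [hIoc] with τ hτ
        have hτ0 : 0 < τ := hτ.1
        have hτ1 : τ ≤ 1 := hτ.2
        have hl_int : x + τ • d ∈ interior C := by
          have hrep : x + τ • d = τ • y + (1 - τ) • x := by rw [hdd]; module
          rw [hrep]
          exact hous.interior_add_mem (hous.interior_smul hτ0 hy)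
            (hous.smul_mem _ (by linarith) _ (interior_subset hx))
        have hm_int : k (x + τ • d) ∈ interior C := hkmap _ hl_int
        have hseg2 := hous.SEG1 hy hx hl_int (lam := τ) (nu := 1 - τ) hτ0.le (by linarith)
          (by rw [hdd]; module)
        -- transfer to the pair (x, k y)
        have a1 := hkM y hy x hx
        rw [hkx] at a1
        have a2 := hkM (x + τ • d) hl_int x hx
        rw [hkx] at a2
        have a3 := hkM y hy (x + τ • d) hl_int
        have e1 : Mratio C x (k y)
            = Mratio C x (k (x + τ • d)) * Mratio C (k (x + τ • d)) (k y) := by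
          rw [a1, a2, a3, hseg2]
          ring
        have hcop := hous.coplanar_of_eq hsc hx hky hm_int hxky e1
        exact Submodule.smul_mem _ _ (Submodule.sub_mem _ hcop hxmem)
      have hlim := hclosed.mem_of_tendsto hkder hev
      have hdm : d ∈ Submodule.span ℝ ({x, k y} : Set V) := by
        have := (Submodule.span ℝ ({x, k y} : Set V)).neg_mem hlim
        simpa using this
      have hfin := (Submodule.span ℝ ({x, k y} : Set V)).add_mem hxmem hdm
      have hyd : y = x + d := by rw [hdd]; module
      rwa [← hyd] at hfin
    obtain ⟨γ, δ', hγδ⟩ := Submodule.mem_span_pair.mp hspan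
    have hδ0 : δ' ≠ 0 := by
      intro h0
      rw [h0, zero_smul, add_zero] at hγδ
      have hγ0 : γ ≠ 0 := by
        rintro rfl; rw [zero_smul] at hγδ; exact hy0 hγδ.symm
      exact hfin2.2 γ⁻¹ (by rw [← hγδ, smul_smul, inv_mul_cancel₀ hγ0, one_smul])
    -- k y ∈ span {x, y}
    have hkyrep : k y = δ'⁻¹ • (y - γ • x) := by
      have h1 : δ' • k y = y - γ • x := eq_sub_iff_add_eq'.mpr hγδ
      rw [← h1, smul_smul, inv_mul_cancel₀ hδ0, one_smul]
    -- trichotomy for k y in the plane of x, y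
    have hky_span : k y ∈ Submodule.span ℝ ({x, y} : Set V) := by
      rw [Submodule.mem_span_pair]
      exact ⟨-γ * δ'⁻¹, δ'⁻¹, by rw [hkyrep]; module⟩
    have hMxy := hous.M_pos hx hy
    have hMyx := hous.M_pos hy hx
    have inv1 : Mratio C x (k y) = Mratio C y x := by
      have := hkM y hy x hx; rwa [hkx] at this
    have inv2 : Mratio C (k y) x = Mratio C x y := by
      have := hkM x hx y hy; rwa [hkx] at this
    rcases hous.trichotomy hx hy hky hky_span with ⟨l, n, hl, hn, hcase⟩ |
      ⟨l, n, hl, hn, hcase⟩ | ⟨l, n, hl, hn, hcase⟩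
    · -- k y = l • x + n • y  (k y in the band) : forces k y ∥ y
      left
      have hseg_a := hous.SEG1 hx hy hky hl hn hcase
      have hseg_b := hous.SEG1 hy hx hky hn hl (by rw [hcase]; module)
      rw [inv2] at hseg_b
      -- hseg_a : M x y = M x (ky) * M (ky) y ; with inv1 : M x (ky) = M y x
      rw [inv1] at hseg_a
      -- hseg_a : M x y = M y x * M (ky) y ; hseg_b : M y x = M y (ky) * M x y
      have hprod : Mratio C (k y) y * Mratio C y (k y) = 1 := by
        have hMxy0 : Mratio C x y ≠ 0 := ne_of_gt hMxy
        have hMyx0 : Mratio C y x ≠ 0 := ne_of_gt hMyx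
        have h4 : Mratio C x y * Mratio C y x * 1
            = Mratio C x y * Mratio C y x * (Mratio C (k y) y * Mratio C y (k y)) := by
          calc Mratio C x y * Mratio C y x * 1
              = Mratio C x y * Mratio C y x := by ring
            _ = (Mratio C y x * Mratio C (k y) y) * (Mratio C y (k y) * Mratio C x y) := by
                rw [← hseg_a, ← hseg_b]
            _ = Mratio C x y * Mratio C y x * (Mratio C (k y) y * Mratio C y (k y)) := by
                ring
        have := mul_left_cancel₀ (mul_ne_zero hMxy0 hMyx0) h4
        exact this.symm
      have hkyy := hous.M_proj_eq hky hy hprod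
      exact ⟨Mratio C (k y) y, hous.M_pos hky hy, hkyy⟩
    · -- x = l • (k y) + n • y : the expected case, k y on the other side
      right
      have hl0 : l ≠ 0 := by
        intro h0
        rw [h0, zero_smul, zero_add] at hcase
        have hn0 : n ≠ 0 := by
          rintro rfl; rw [zero_smul] at hcase; exact hx0 hcase
        exact hfin2.2 n (hcase.symm)
      have hlpos : 0 < l := lt_of_le_of_ne hl (Ne.symm hl0)
      have hn0 : n ≠ 0 := by
        intro h0
        rw [h0, zero_smul, add_zero] at hcase
        have hfin2' := linearIndependent_fin2.mp hxky
        simp only [Matrix.cons_val_one, Matrix.head_cons, Matrix.cons_val_zero] at hfin2'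
        exact hfin2'.2 l hcase.symm
      have hnpos : 0 < n := lt_of_le_of_ne hn (Ne.symm hn0)
      refine ⟨l⁻¹, -(n * l⁻¹), by
        have : 0 < n * l⁻¹ := by positivity
        linarith, ?_⟩
      have h1 : l • k y = x - n • y := by rw [hcase]; module
      have h2 : k y = l⁻¹ • (x - n • y) := by
        rw [← h1, smul_smul, inv_mul_cancel₀ hl0, one_smul]
      rw [h2]; module
    · -- y = l • x + n • (k y) : forces k y ∥ y
      left
      have hseg_a := hous.SEG1 hx hky hy hl hn hcase
      have hme3 : y = n • k y + l • x := by
        conv_lhs => rw [hcase]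
        module
      have hseg_b := hous.SEG1 hky hx hy hn hl hme3
      rw [inv1] at hseg_a
      rw [inv2] at hseg_b
      -- hseg_a : M y x = M x y * M y (ky) ; hseg_b : M x y = M (ky) y * M y x
      have hprod : Mratio C y (k y) * Mratio C (k y) y = 1 := by
        have hMxy0 : Mratio C x y ≠ 0 := ne_of_gt hMxy
        have hMyx0 : Mratio C y x ≠ 0 := ne_of_gt hMyx
        have h4 : Mratio C y x * Mratio C x y * 1
            = Mratio C y x * Mratio C x y * (Mratio C y (k y) * Mratio C (k y) y) := by
          calc Mratio C y x * Mratio C x y * 1 = Mratio C y x * Mratio C x y := by ring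
            _ = (Mratio C x y * Mratio C y (k y)) * (Mratio C (k y) y * Mratio C y x) := by
                rw [← hseg_a, ← hseg_b]
            _ = Mratio C y x * Mratio C x y * (Mratio C y (k y) * Mratio C (k y) y) := by
                ring
        have := mul_left_cancel₀ (mul_ne_zero hMyx0 hMxy0) h4
        exact this.symm
      have hyky := hous.M_proj_eq hy hky hprod
      have hMyky := hous.M_pos hy hky
      refine ⟨(Mratio C y (k y))⁻¹, inv_pos.mpr hMyky, ?_⟩
      have h5 : (Mratio C y (k y))⁻¹ • y = (Mratio C y (k y))⁻¹ • (Mratio C y (k y) • k y) := by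
        rw [← hyky]
      rw [h5, smul_smul, inv_mul_cancel₀ (ne_of_gt hMyky), one_smul]
  -- Final assembly
  intro y hy
  show S (S y) = y
  by_cases hdep : LinearIndependent ℝ ![x, y]
  · -- main case : x, y linearly independent
    have KS := KEY S hS_maps hSx MS hSh hSinj y hy hdep (hSder (y - x))
    have KT := KEY T hT_maps hTx MT hTh hTinj y hy hdep (hTder (y - x))
    have hSy_int : S y ∈ interior C := hS_maps y hy
    have hTy_int : T y ∈ interior C := hT_maps y hy
    have hMxy := hous.M_pos hx hy
    have hMyx := hous.M_pos hy hx
    have iS1 : Mratio C (S y) x = Mratio C x y := by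
      have := MS x hx y hy; rwa [hSx] at this
    have iS2 : Mratio C x (S y) = Mratio C y x := by
      have := MS y hy x hx; rwa [hSx] at this
    have iT1 : Mratio C (T y) x = Mratio C x y := by
      have := MT x hx y hy; rwa [hTx] at this
    have iT2 : Mratio C x (T y) = Mratio C y x := by
      have := MT y hy x hx; rwa [hTx] at this
    rcases KS with ⟨c, hc, hSy⟩ | ⟨α, β, hβ, hSy⟩
    · rw [show S (S y) = S (c • y) by rw [hSy], hSh c hc y hy, hSy, smul_smul,
        inv_mul_cancel₀ (ne_of_gt hc), one_smul]
    rcases KT with ⟨c', hc', hTy⟩ | ⟨α', β', hβ', hTy⟩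
    · -- T y = c' • y  forces  S y = c' • y
      have h1 : S (T y) = y := hST y hy
      rw [hTy, hSh c' hc' y hy] at h1
      have h2 : c' • (c'⁻¹ • S y) = c' • y := by rw [h1]
      rw [smul_smul, mul_inv_cancel₀ (ne_of_gt hc'), one_smul] at h2
      rw [show S (S y) = S (c' • y) by rw [h2], hSh c' hc' y hy, h2, smul_smul,
        inv_mul_cancel₀ (ne_of_gt hc'), one_smul]
    · -- both on the far side : S y = T y by uniqueness
      suffices hSTeq : S y = T y by
        rw [hSTeq]; exact hST y hy
      have hfin2 := LinearIndependent.pair_iff.mp hdep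
      have hβ0 : β ≠ 0 := ne_of_lt hβ
      have hspan2 : T y ∈ Submodule.span ℝ ({x, S y} : Set V) := by
        rw [Submodule.mem_span_pair]
        refine ⟨α' - β' * α / β, β' / β, ?_⟩
        rw [hSy, hTy]
        match_scalars <;> field_simp <;> ring
      rcases hous.trichotomy hx hSy_int hTy_int hspan2 with ⟨l, n, hl, hn, hcase⟩ |
        ⟨l, n, hl, hn, hcase⟩ | ⟨l, n, hl, hn, hcase⟩
      · -- T y = l • x + n • S y
        have hseg_a := hous.SEG1 hx hSy_int hTy_int hl hn hcase
        have hme : T y = n • S y + l • x := by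
          conv_lhs => rw [hcase]
          module
        have hseg_b := hous.SEG1 hSy_int hx hTy_int hn hl hme
        rw [iS2, iT2] at hseg_a
        rw [iS1, iT1] at hseg_b
        have hZ1 : Mratio C (T y) (S y) = 1 := by
          have h0 : Mratio C y x * 1 = Mratio C y x * Mratio C (T y) (S y) := by
            linear_combination hseg_a
          exact (mul_left_cancel₀ (ne_of_gt hMyx) h0).symm
        have hZ2 : Mratio C (S y) (T y) = 1 := by
          have h0 : Mratio C x y * 1 = Mratio C x y * Mratio C (S y) (T y) := by
            linear_combination hseg_b
          exact (mul_left_cancel₀ (ne_of_gt hMxy) h0).symm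
        have hprod : Mratio C (S y) (T y) * Mratio C (T y) (S y) = 1 := by
          rw [hZ1, hZ2, mul_one]
        have hfin := hous.M_proj_eq hSy_int hTy_int hprod
        rw [hfin, hZ2, one_smul]
      · -- x = l • T y + n • S y : impossible since both are on the far side
        exfalso
        have hc2 : x = (l * α' + n * α) • x + (l * β' + n * β) • y := by
          conv_lhs => rw [hcase]
          rw [hTy, hSy]; module
        have h3 : ((l * α' + n * α) • x + (l * β' + n * β) • y) - x = 0 :=
          sub_eq_zero_of_eq hc2.symm
        have h0 : (l * α' + n * α - 1) • x + (l * β' + n * β) • y = 0 := by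
          rw [← h3]; module
        obtain ⟨hA, hB⟩ := hfin2 _ _ h0
        have hlb : l * β' ≤ 0 := mul_nonpos_of_nonneg_of_nonpos hl hβ'.le
        have hnb : n * β ≤ 0 := mul_nonpos_of_nonneg_of_nonpos hn hβ.le
        have hl0 : l * β' = 0 := by linarith
        have hn0 : n * β = 0 := by linarith
        have hl' : l = 0 := by
          rcases mul_eq_zero.mp hl0 with h' | h'
          · exact h'
          · exact absurd h' (ne_of_lt hβ')
        have hn' : n = 0 := by
          rcases mul_eq_zero.mp hn0 with h' | h'
          · exact h'
          · exact absurd h' hβ0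
        rw [hl', hn'] at hA
        norm_num at hA
      · -- S y = l • x + n • T y
        have hseg_a := hous.SEG1 hx hTy_int hSy_int hl hn hcase
        have hme : S y = n • T y + l • x := by
          conv_lhs => rw [hcase]
          module
        have hseg_b := hous.SEG1 hTy_int hx hSy_int hn hl hme
        rw [iS2, iT2] at hseg_a
        rw [iS1, iT1] at hseg_b
        have hZ2 : Mratio C (S y) (T y) = 1 := by
          have h0 : Mratio C y x * 1 = Mratio C y x * Mratio C (S y) (T y) := by
            linear_combination hseg_a
          exact (mul_left_cancel₀ (ne_of_gt hMyx) h0).symm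
        have hZ1 : Mratio C (T y) (S y) = 1 := by
          have h0 : Mratio C x y * 1 = Mratio C x y * Mratio C (T y) (S y) := by
            linear_combination hseg_b
          exact (mul_left_cancel₀ (ne_of_gt hMxy) h0).symm
        have hprod : Mratio C (S y) (T y) * Mratio C (T y) (S y) = 1 := by
          rw [hZ1, hZ2, mul_one]
        have hfin := hous.M_proj_eq hSy_int hTy_int hprod
        rw [hfin, hZ2, one_smul]
  · -- degenerate case : y is a positive multiple of x
    rw [linearIndependent_fin2] at hdep
    simp only [Matrix.cons_val_one, Matrix.head_cons, Matrix.cons_val_zero] at hdep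
    push_neg at hdep
    have hy0 : y ≠ 0 := hous.ne_zero_of_interior hy
    obtain ⟨a, hay⟩ := hdep hy0
    have ha0 : a ≠ 0 := by
      rintro rfl; rw [zero_smul] at hay
      exact (hous.ne_zero_of_interior hx) hay.symm
    have hyx : y = a⁻¹ • x := by rw [← hay, smul_smul, inv_mul_cancel₀ ha0, one_smul]
    have hia : 0 < a⁻¹ := hous.pos_of_smul_eq hy hx hyx
    have ha : 0 < a := by
      rcases lt_trichotomy a 0 with h' | h' | h'
      · exfalso; have : a⁻¹ < 0 := inv_lt_zero.mpr h'; linarith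
      · exact absurd h' ha0
      · exact h'
    have hSy : S y = a • x := by
      rw [hyx, hSh a⁻¹ hia x hx, inv_inv, hSx]
    rw [hSy, hSh a ha x hx, hSx, ← hyx]
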